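/- Let n ≥ 1 be an integer, τ > 0 a real number, and a₀,…,a_{n−1}, b₀ real coefficients, and let Δ(s) = s^n + Σ_{k=0}^{n−1} a_k s^k + b₀ e^{−sτ}. If s₁ > s₂ > ⋯ > s_{n+1} are n + 1 distinct real numbers with Δ(s_j) = 0 for all 1 ≤ j ≤ n + 1, then s₁ is a dominant root of Δ: every complex root s of Δ satisfies Re s ≤ s₁. -/

import Mathlib

open MeasureTheory intervalIntegral Set Polynomial

set_option maxHeartbeats 1000000


open Real intervalIntegral

lemma exp_mul_sin_integral_pos {β y v : ℝ} (hβ : 0 < β) (hy : 0 < y) (hv : 0 < v) :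
    0 < ∫ u in (0:ℝ)..v, Real.exp (-β * u) * Real.sin (y * u) := by
  have hcont : Continuous fun u : ℝ => Real.exp (-β * u) * Real.sin (y * u) := by
    continuity
  rcases le_or_gt (y * v) π with hsmall | hbig
  · apply intervalIntegral_pos_of_pos_on (hcont.intervalIntegrable 0 v)
    · intro u hu
      apply mul_pos (Real.exp_pos _)
      apply Real.sin_pos_of_pos_of_lt_pi (mul_pos hy hu.1)
      calc y * u < y * v := by nlinarith [hu.1, hu.2]
        _ ≤ π := hsmall
    · exact hv
  · -- explicit antiderivative
    set c : ℝ := β ^ 2 + y ^ 2 with hc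
    have hc0 : 0 < c := by positivity
    set A : ℝ → ℝ := fun u =>
      (y - Real.exp (-β * u) * (y * Real.cos (y * u) + β * Real.sin (y * u))) / c with hA
    have hderiv : ∀ u : ℝ, HasDerivAt A (Real.exp (-β * u) * Real.sin (y * u)) u := by
      intro u
      have h0 : HasDerivAt (fun u : ℝ => -β * u) (-β) u := by
        simpa using (hasDerivAt_id u).const_mul (-β)
      have hy0 : HasDerivAt (fun u : ℝ => y * u) y u := by
        simpa using (hasDerivAt_id u).const_mul y
      have h1 := h0.exp
      have h2 := hy0.cos
      have h3 := hy0.sin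
      have h4 := ((h2.const_mul y).add (h3.const_mul β))
      have h5 := (h1.mul h4)
      have h6 := ((hasDerivAt_const u y).sub h5).div_const c
      convert h6 using 1
      · rfl
      · rfl
      · rfl
      field_simp
      simp only [Pi.add_apply, hc]
      ring
    rw [integral_eq_sub_of_hasDerivAt (fun u _ => hderiv u) (hcont.intervalIntegrable 0 v)]
    have hA0 : A 0 = 0 := by simp [hA]
    rw [hA0, sub_zero, hA]
    apply div_pos ?_ hc0
    -- show exp(-βv)*(y cos + β sin) < y
    set C := Real.cos (y * v)
    set S := Real.sin (y * v)
    have hcs : C ^ 2 + S ^ 2 = 1 := by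
      rw [add_comm]; exact Real.sin_sq_add_cos_sq (y * v)
    have hE0 : 0 < Real.exp (-β * v) := Real.exp_pos _
    have hE1 : Real.exp (-β * v) * (1 + β * v) ≤ 1 := by
      have := Real.add_one_le_exp (β * v)
      calc Real.exp (-β * v) * (1 + β * v) ≤ Real.exp (-β * v) * Real.exp (β * v) := by
            nlinarith
        _ = 1 := by rw [← Real.exp_add]; ring_nf; simp
    have hyv : π < y * v := hbig
    have hpi : (3:ℝ) < π := Real.pi_gt_three
    rcases le_or_gt (y * C + β * S) 0 with ht | ht
    · nlinarith
    · have hineq : (y * C + β * S) ^ 2 ≤ y ^ 2 + β ^ 2 := by nlinarith [sq_nonneg (y * S - β * C)]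
      have h35 : (3:ℝ) < y * v := lt_trans hpi hyv
      have h9 : (9:ℝ) < (y * v) ^ 2 := by nlinarith
      have h7 : y ^ 2 + β ^ 2 < (y * (1 + β * v)) ^ 2 := by
        nlinarith [mul_pos hβ hβ, mul_pos (mul_pos hy hv) (mul_pos hy hy), sq_nonneg (β * (y*v)), mul_pos hβ hy, mul_pos hy hv]
      have hb : 0 < y * (1 + β * v) := by positivity
      have h8 : y * C + β * S < y * (1 + β * v) := by nlinarith [mul_pos hb ht]
      have h9 : Real.exp (-β * v) * (y * C + β * S) < y := by
        calc Real.exp (-β * v) * (y * C + β * S) < Real.exp (-β*v) * (y * (1 + β * v)) := by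
              exact (mul_lt_mul_iff_right₀ hE0).mpr h8
          _ = y * (Real.exp (-β*v) * (1 + β * v)) := by ring
          _ ≤ y * 1 := by nlinarith
          _ = y := mul_one y
      linarith

open MeasureTheory intervalIntegral Set

lemma fubini_triangle {E : Type*} [NormedAddCommGroup E] [NormedSpace ℝ E]
    (f : ℝ → ℝ → E) (hf : Continuous fun p : ℝ × ℝ => f p.1 p.2) {T : ℝ} (hT : 0 ≤ T) :
    ∫ v in (0:ℝ)..T, ∫ u in (0:ℝ)..v, f u v = ∫ u in (0:ℝ)..T, ∫ v in u..T, f u v := by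
  have hS : MeasurableSet {p : ℝ × ℝ | p.1 ≤ p.2} :=
    (isClosed_le continuous_fst continuous_snd).measurableSet
  set g : ℝ → ℝ → E := fun u v => Set.indicator {p : ℝ × ℝ | p.1 ≤ p.2}
      (fun p => f p.1 p.2) (u, v) with hg
  have hint : Integrable (Function.uncurry fun v u => g u v)
      ((volume.restrict (Ioc (0:ℝ) T)).prod (volume.restrict (Ioc (0:ℝ) T))) := by
    rw [Measure.prod_restrict]
    apply Integrable.indicator ?_ ?_
    · have : IntegrableOn (fun p : ℝ × ℝ => f p.2 p.1) (Icc 0 T ×ˢ Icc 0 T) := by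
        apply hf.comp (continuous_swap) |>.continuousOn.integrableOn_compact
        exact (isCompact_Icc).prod isCompact_Icc
      exact this.mono_set (Set.prod_mono Ioc_subset_Icc_self Ioc_subset_Icc_self)
    · exact (isClosed_le continuous_snd continuous_fst).measurableSet
  have swap := integral_integral_swap hint
  have hL : ∫ v in (0:ℝ)..T, ∫ u in (0:ℝ)..v, f u v
      = ∫ v in Ioc (0:ℝ) T, ∫ u in Ioc (0:ℝ) T, g u v := by
    rw [integral_of_le hT]
    apply setIntegral_congr_fun measurableSet_Ioc
    intro v hv
    have h1 : (fun u => g u v) = Set.indicator (Iic v) (fun u => f u v) := by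
      ext u; by_cases h : u ≤ v <;> simp [hg, Set.indicator_apply, h]
    show ∫ u in (0:ℝ)..v, f u v = ∫ u in Ioc (0:ℝ) T, g u v
    rw [h1, setIntegral_indicator measurableSet_Iic,
      show Ioc (0:ℝ) T ∩ Iic v = Ioc 0 v by rw [Ioc_inter_Iic, min_eq_right hv.2],
      integral_of_le hv.1.le]
  have hR : ∫ u in (0:ℝ)..T, ∫ v in u..T, f u v
      = ∫ u in Ioc (0:ℝ) T, ∫ v in Ioc (0:ℝ) T, g u v := by
    rw [integral_of_le hT]
    apply setIntegral_congr_fun measurableSet_Ioc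
    intro u hu
    have h1 : (fun v => g u v) = Set.indicator (Ici u) (fun v => f u v) := by
      ext v; by_cases h : u ≤ v <;> simp [hg, Set.indicator_apply, h]
    show ∫ v in u..T, f u v = ∫ v in Ioc (0:ℝ) T, g u v
    have h2 : Ioc (0:ℝ) T ∩ Ici u = Icc u T := by
      ext x
      simp only [mem_inter_iff, mem_Ioc, mem_Ici, mem_Icc]
      exact ⟨fun h => ⟨h.2, h.1.2⟩, fun h => ⟨⟨lt_of_lt_of_le hu.1 h.1, h.2⟩, h.1⟩⟩
    rw [h1, setIntegral_indicator measurableSet_Ici, h2,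
      integral_Icc_eq_integral_Ioc, integral_of_le hu.2]
  rw [hL, hR]
  exact swap

open MeasureTheory intervalIntegral Set

noncomputable def mm (τ : ℝ) (ρ : ℕ → ℝ) : ℕ → ℝ → ℝ
  | 0, v => Real.exp ((v - τ) * ρ 0)
  | (k+1), u => ∫ v in u..τ, mm τ ρ k v * Real.exp ((u - v) * ρ (k+1))

noncomputable def gg (τ : ℝ) (ρ : ℕ → ℝ) : ℕ → ℂ → ℂ
  | 0, z => Complex.exp (-z * τ)
  | (k+1), z => (gg τ ρ k z - gg τ ρ k (ρ k)) / (z - (ρ k : ℂ))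

lemma mm_succ_eq (τ : ℝ) (ρ : ℕ → ℝ) (k : ℕ) (u : ℝ) :
    mm τ ρ (k+1) u
      = Real.exp (u * ρ (k+1)) * ∫ v in u..τ, mm τ ρ k v * Real.exp (-(v * ρ (k+1))) := by
  show (∫ v in u..τ, mm τ ρ k v * Real.exp ((u - v) * ρ (k+1))) = _
  rw [← intervalIntegral.integral_const_mul]
  apply intervalIntegral.integral_congr
  intro v _
  show mm τ ρ k v * Real.exp ((u - v) * ρ (k+1)) = _
  rw [show (u - v) * ρ (k+1) = u * ρ (k+1) + -(v * ρ (k+1)) by ring, Real.exp_add]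
  ring

lemma mm_cont (τ : ℝ) (ρ : ℕ → ℝ) : ∀ k, Continuous (mm τ ρ k) := by
  intro k
  induction k with
  | zero => show Continuous fun v => Real.exp ((v - τ) * ρ 0); continuity
  | succ k ih =>
    have h1 : Continuous fun v => mm τ ρ k v * Real.exp (-(v * ρ (k+1))) := by continuity
    have h2 : Continuous fun u : ℝ => ∫ v in u..τ, mm τ ρ k v * Real.exp (-(v * ρ (k+1))) := by
      have hi : ∀ a b : ℝ, IntervalIntegrable
          (fun v => mm τ ρ k v * Real.exp (-(v * ρ (k+1)))) volume a b :=
        fun a b => h1.intervalIntegrable a b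
      have h3 := intervalIntegral.continuous_primitive hi τ
      have : (fun u : ℝ => ∫ v in u..τ, mm τ ρ k v * Real.exp (-(v * ρ (k+1))))
          = fun u : ℝ => -∫ v in τ..u, mm τ ρ k v * Real.exp (-(v * ρ (k+1))) := by
        funext u; rw [intervalIntegral.integral_symm]
      rw [this]
      exact h3.neg
    have : Continuous fun u => Real.exp (u * ρ (k+1)) *
        ∫ v in u..τ, mm τ ρ k v * Real.exp (-(v * ρ (k+1))) := by
      exact (Real.continuous_exp.comp (by continuity)).mul h2
    exact (funext (mm_succ_eq τ ρ k) : mm τ ρ (k+1) = _) ▸ this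

lemma mm_pos (τ : ℝ) (ρ : ℕ → ℝ) : ∀ k, ∀ u, 0 ≤ u → u < τ → 0 < mm τ ρ k u := by
  intro k
  induction k with
  | zero => intro u _ _; exact Real.exp_pos _
  | succ k ih =>
    intro u hu0 huτ
    show 0 < ∫ v in u..τ, mm τ ρ k v * Real.exp ((u - v) * ρ (k+1))
    apply intervalIntegral.intervalIntegral_pos_of_pos_on
    · exact ((mm_cont τ ρ k).mul (by continuity)).intervalIntegrable u τ
    · intro v hv
      exact mul_pos (ih v (le_trans hu0 hv.1.le) hv.2) (Real.exp_pos _)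
    · exact huτ

open MeasureTheory intervalIntegral Set

lemma contC {f : ℝ → ℝ} (hf : Continuous f) (w : ℂ) :
    Continuous fun v : ℝ => (f v : ℂ) * Complex.exp (-v * w) := by
  apply (Complex.continuous_ofReal.comp hf).mul
  exact Complex.continuous_exp.comp (by continuity)

lemma gg_rep (τ : ℝ) (hτ : 0 ≤ τ) (ρ : ℕ → ℝ) : ∀ k : ℕ,
    (∀ i j : ℕ, i < j → j ≤ k → ρ i ≠ ρ j) →
    ∀ z : ℂ, (∀ j : ℕ, j ≤ k → z ≠ (ρ j : ℂ)) →
    gg τ ρ (k+1) z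
      = (-1)^(k+1) * ∫ v in (0:ℝ)..τ, (mm τ ρ k v : ℂ) * Complex.exp (-v * z) := by
  intro k
  induction k with
  | zero =>
    intro _ z hz
    have hzρ : z ≠ (ρ 0 : ℂ) := hz 0 le_rfl
    have hc : ((ρ 0 : ℂ)) - z ≠ 0 := sub_ne_zero.mpr (Ne.symm hzρ)
    have hint : ∀ v ∈ uIcc (0:ℝ) τ, (mm τ ρ 0 v : ℂ) * Complex.exp (-v * z)
        = Complex.exp (-(τ:ℂ) * ρ 0) * Complex.exp (((ρ 0 : ℂ) - z) * v) := by
      intro v _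
      show ((Real.exp ((v - τ) * ρ 0) : ℝ) : ℂ) * Complex.exp (-v * z) = _
      rw [Complex.ofReal_exp, ← Complex.exp_add, ← Complex.exp_add]
      congr 1
      push_cast
      ring
    rw [intervalIntegral.integral_congr hint, intervalIntegral.integral_const_mul,
      integral_exp_mul_complex hc]
    show (Complex.exp (-z * τ) - Complex.exp (-(ρ 0:ℂ) * τ)) / (z - (ρ 0:ℂ)) = _
    have key : Complex.exp (-(τ:ℂ) * ρ 0) * Complex.exp (((ρ 0:ℂ) - z) * τ)
        = Complex.exp (-z * τ) := by rw [← Complex.exp_add]; congr 1; ring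
    have key2 : Complex.exp (-(τ:ℂ) * ρ 0) * Complex.exp (((ρ 0:ℂ) - z) * 0)
        = Complex.exp (-(ρ 0:ℂ) * τ) := by
      rw [← Complex.exp_add]
      congr 1
      ring
    have hzc : z - (ρ 0 : ℂ) ≠ 0 := sub_ne_zero.mpr hzρ
    rw [← key, ← key2]
    field_simp
    simp only [Complex.ofReal_zero, mul_zero, sub_self, Complex.exp_zero]
    ring
  | succ k ih =>
    intro hd z hz
    have hd' : ∀ i j : ℕ, i < j → j ≤ k → ρ i ≠ ρ j :=
      fun i j h1 h2 => hd i j h1 (h2.trans (Nat.le_succ k))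
    have hz' : ∀ j : ℕ, j ≤ k → z ≠ (ρ j : ℂ) := fun j hj => hz j (hj.trans (Nat.le_succ k))
    have hρ' : ∀ j : ℕ, j ≤ k → ((ρ (k+1) : ℝ) : ℂ) ≠ (ρ j : ℂ) := by
      intro j hj h
      exact (hd j (k+1) (Nat.lt_succ_of_le hj) le_rfl) (by exact_mod_cast h.symm)
    have hzc : z ≠ ((ρ (k+1) : ℝ) : ℂ) := hz (k+1) le_rfl
    have hcz : ((ρ (k+1) : ℝ) : ℂ) - z ≠ 0 := sub_ne_zero.mpr (Ne.symm hzc)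
    have hzc' : z - ((ρ (k+1) : ℝ) : ℂ) ≠ 0 := sub_ne_zero.mpr hzc
    have A := ih hd' z hz'
    have B := ih hd' ((ρ (k+1) : ℝ) : ℂ) hρ'
    have cmm := mm_cont τ ρ k
    have cz : Continuous fun v : ℝ => (mm τ ρ k v : ℂ) * Complex.exp (-v * z) := contC cmm z
    have cc : Continuous fun v : ℝ =>
        (mm τ ρ k v : ℂ) * Complex.exp (-v * ((ρ (k+1) : ℝ) : ℂ)) := contC cmm _
    have step1 : ∀ u ∈ uIcc (0:ℝ) τ, (mm τ ρ (k+1) u : ℂ) * Complex.exp (-u * z)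
        = ∫ v in u..τ, (mm τ ρ k v : ℂ) * Complex.exp (((u:ℂ) - v) * (ρ (k+1) : ℝ))
            * Complex.exp (-u * z) := by
      intro u _
      have h0 : (mm τ ρ (k+1) u : ℂ)
          = ∫ v in u..τ, (mm τ ρ k v : ℂ) * Complex.exp (((u:ℂ) - v) * (ρ (k+1) : ℝ)) := by
        show ((∫ v in u..τ, mm τ ρ k v * Real.exp ((u - v) * ρ (k+1)) : ℝ) : ℂ) = _
        rw [← intervalIntegral.integral_ofReal]
        apply intervalIntegral.integral_congr
        intro v _
        push_cast [Complex.ofReal_exp]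
        ring
      rw [h0, ← intervalIntegral.integral_mul_const]
    have hjoint : Continuous fun p : ℝ × ℝ =>
        (mm τ ρ k p.2 : ℂ) * Complex.exp (((p.1:ℂ) - p.2) * (ρ (k+1) : ℝ))
          * Complex.exp (-p.1 * z) := by
      apply Continuous.mul
      · apply Continuous.mul
        · exact Complex.continuous_ofReal.comp (cmm.comp continuous_snd)
        · exact Complex.continuous_exp.comp
            (((Complex.continuous_ofReal.comp continuous_fst).sub
              (Complex.continuous_ofReal.comp continuous_snd)).mul continuous_const)
      · exact Complex.continuous_exp.comp
          (((Complex.continuous_ofReal.comp continuous_fst).neg).mul continuous_const)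
    have fub := fubini_triangle (fun u v => (mm τ ρ k v : ℂ)
        * Complex.exp (((u:ℂ) - v) * (ρ (k+1) : ℝ)) * Complex.exp (-u * z)) hjoint hτ
    have inner : ∀ v ∈ uIcc (0:ℝ) τ,
        (∫ u in (0:ℝ)..v, (mm τ ρ k v : ℂ) * Complex.exp (((u:ℂ) - v) * (ρ (k+1) : ℝ))
            * Complex.exp (-u * z))
        = ((mm τ ρ k v : ℂ) * Complex.exp (-v * z)
            - (mm τ ρ k v : ℂ) * Complex.exp (-v * ((ρ (k+1) : ℝ) : ℂ)))
              / (((ρ (k+1) : ℝ) : ℂ) - z) := by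
      intro v _
      have e1 : ∀ u ∈ uIcc (0:ℝ) v,
          (mm τ ρ k v : ℂ) * Complex.exp (((u:ℂ) - v) * (ρ (k+1) : ℝ))
            * Complex.exp (-u * z)
          = ((mm τ ρ k v : ℂ) * Complex.exp (-(v:ℂ) * (ρ (k+1) : ℝ)))
              * Complex.exp ((((ρ (k+1) : ℝ) : ℂ) - z) * u) := by
        intro u _
        rw [mul_assoc, mul_assoc, ← Complex.exp_add, ← Complex.exp_add]
        congr 2
        ring
      rw [intervalIntegral.integral_congr e1, intervalIntegral.integral_const_mul,
        integral_exp_mul_complex hcz]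
      have k1 : Complex.exp (-(v:ℂ) * (ρ (k+1) : ℝ))
          * Complex.exp ((((ρ (k+1) : ℝ) : ℂ) - z) * v) = Complex.exp (-v * z) := by
        rw [← Complex.exp_add]; congr 1; ring
      have k2 : Complex.exp (-(v:ℂ) * (ρ (k+1) : ℝ))
          * Complex.exp ((((ρ (k+1) : ℝ) : ℂ) - z) * 0)
          = Complex.exp (-v * ((ρ (k+1) : ℝ) : ℂ)) := by
        rw [← Complex.exp_add]; congr 1; ring
      rw [← k1, ← k2]
      field_simp
      simp only [Complex.ofReal_zero, mul_zero, sub_self, Complex.exp_zero]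
    have key : ∫ u in (0:ℝ)..τ, (mm τ ρ (k+1) u : ℂ) * Complex.exp (-u * z)
        = (∫ v in (0:ℝ)..τ, ((mm τ ρ k v : ℂ) * Complex.exp (-v * z)
            - (mm τ ρ k v : ℂ) * Complex.exp (-v * ((ρ (k+1) : ℝ) : ℂ))))
          / (((ρ (k+1) : ℝ) : ℂ) - z) := by
      rw [intervalIntegral.integral_congr step1, ← fub,
        intervalIntegral.integral_congr inner, intervalIntegral.integral_div]
    have hsub : (∫ v in (0:ℝ)..τ, ((mm τ ρ k v : ℂ) * Complex.exp (-v * z)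
            - (mm τ ρ k v : ℂ) * Complex.exp (-v * ((ρ (k+1) : ℝ) : ℂ))))
        = (∫ v in (0:ℝ)..τ, (mm τ ρ k v : ℂ) * Complex.exp (-v * z))
          - ∫ v in (0:ℝ)..τ, (mm τ ρ k v : ℂ) * Complex.exp (-v * ((ρ (k+1) : ℝ) : ℂ)) :=
      intervalIntegral.integral_sub (cz.intervalIntegrable _ _) (cc.intervalIntegrable _ _)
    have key2 : (∫ v in (0:ℝ)..τ, (mm τ ρ k v : ℂ) * Complex.exp (-v * z))
          - (∫ v in (0:ℝ)..τ, (mm τ ρ k v : ℂ) * Complex.exp (-v * ((ρ (k+1) : ℝ) : ℂ)))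
        = (((ρ (k+1) : ℝ) : ℂ) - z)
          * ∫ u in (0:ℝ)..τ, (mm τ ρ (k+1) u : ℂ) * Complex.exp (-u * z) := by
      rw [key, ← hsub]
      field_simp
      apply intervalIntegral.integral_congr
      intro v _
      ring_nf
    show (gg τ ρ (k+1) z - gg τ ρ (k+1) (ρ (k+1))) / (z - ((ρ (k+1) : ℝ) : ℂ)) = _
    rw [A, B, div_eq_iff hzc', pow_succ ((-1 : ℂ)) (k+1)]
    linear_combination ((-1:ℂ)^(k+1)) * key2

open Polynomial

noncomputable def pp (n : ℕ) (a : Fin n → ℝ) (ρ : ℕ → ℝ) : ℕ → Polynomial ℂ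
  | 0 => X ^ n + ∑ k : Fin n, C ((a k : ℂ)) * X ^ (k : ℕ)
  | (k+1) => (pp n a ρ k - C ((pp n a ρ k).eval ((ρ k : ℝ) : ℂ)))
      /ₘ (X - C ((ρ k : ℝ) : ℂ))

lemma pp_eval_rec (n : ℕ) (a : Fin n → ℝ) (ρ : ℕ → ℝ) (k : ℕ) (z : ℂ) :
    (z - (ρ k : ℂ)) * (pp n a ρ (k+1)).eval z
      = (pp n a ρ k).eval z - (pp n a ρ k).eval ((ρ k : ℂ)) := by
  have h : (X - C ((ρ k : ℝ) : ℂ)) * (pp n a ρ (k+1))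
      = pp n a ρ k - C ((pp n a ρ k).eval ((ρ k : ℝ) : ℂ)) := by
    apply mul_divByMonic_eq_iff_isRoot.mpr
    simp [IsRoot]
  have h2 := congrArg (fun q => Polynomial.eval z q) h
  simpa using h2

lemma pp_deg (n : ℕ) (a : Fin n → ℝ) (ρ : ℕ → ℝ) : ∀ k, (pp n a ρ k).natDegree ≤ n - k := by
  intro k
  induction k with
  | zero =>
    show (X ^ n + ∑ k : Fin n, C ((a k : ℂ)) * X ^ (k : ℕ)).natDegree ≤ n - 0
    apply le_trans (natDegree_add_le _ _)
    simp only [Nat.sub_zero, max_le_iff, natDegree_X_pow, le_refl, true_and]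
    apply Polynomial.natDegree_sum_le_of_forall_le
    intro i _
    apply le_trans (natDegree_C_mul_le _ _)
    simpa using (i.2.le)
  | succ k ih =>
    show ((pp n a ρ k - C ((pp n a ρ k).eval ((ρ k : ℝ) : ℂ)))
      /ₘ (X - C ((ρ k : ℝ) : ℂ))).natDegree ≤ n - (k+1)
    rw [natDegree_divByMonic _ (monic_X_sub_C _), natDegree_sub_C, natDegree_X_sub_C]
    omega
lemma pp_last (n : ℕ) (a : Fin n → ℝ) (ρ : ℕ → ℝ) : pp n a ρ (n+1) = 0 := by
  have h := pp_deg n a ρ n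
  rw [Nat.sub_self] at h
  have h2 : pp n a ρ n = C ((pp n a ρ n).coeff 0) := eq_C_of_natDegree_le_zero h
  show (pp n a ρ n - C ((pp n a ρ n).eval ((ρ n : ℝ) : ℂ))) /ₘ (X - C ((ρ n : ℝ) : ℂ)) = 0
  rw [h2]
  simp

open Polynomial

lemma bridge (n : ℕ) (τ : ℝ) (a : Fin n → ℝ) (b₀ : ℝ) (ρ : ℕ → ℝ)
    (hroots : ∀ j : ℕ, j ≤ n → ((ρ j : ℂ)) ^ n + (∑ k : Fin n, (a k : ℂ) * (ρ j : ℂ) ^ (k:ℕ))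
      + (b₀:ℂ) * Complex.exp (-(ρ j : ℂ) * τ) = 0)
    (hd : ∀ i j : ℕ, i < j → j ≤ n → ρ i ≠ ρ j) :
    ∀ k, k ≤ n+1 → ∀ z : ℂ, (∀ j : ℕ, j < k → z ≠ (ρ j : ℂ)) →
    ((pp n a ρ k).eval z + b₀ * gg τ ρ k z) * ∏ j ∈ Finset.range k, (z - (ρ j : ℂ))
      = z ^ n + (∑ k : Fin n, (a k : ℂ) * z ^ (k:ℕ)) + (b₀:ℂ) * Complex.exp (-z * τ) := by
  intro k
  induction k with
  | zero =>
    intro _ z _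
    show ((pp n a ρ 0).eval z + b₀ * Complex.exp (-z * τ)) * ∏ j ∈ Finset.range 0, _ = _
    simp only [Finset.range_zero, Finset.prod_empty, mul_one]
    show (X ^ n + ∑ k : Fin n, C ((a k : ℂ)) * X ^ (k : ℕ)).eval z + _ = _
    simp [Polynomial.eval_finset_sum]
  | succ k ih =>
    intro hk z hznodes
    have hk' : k ≤ n := Nat.succ_le_succ_iff.mp hk
    have hzk : z ≠ (ρ k : ℂ) := hznodes k (Nat.lt_succ_self k)
    have ihz := ih (hk'.trans (Nat.le_succ n)) z
      (fun j hj => hznodes j (hj.trans (Nat.lt_succ_self k)))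
    have hρknodes : ∀ j : ℕ, j < k → ((ρ k : ℝ) : ℂ) ≠ (ρ j : ℂ) := by
      intro j hj h
      exact hd j k hj hk' (by exact_mod_cast h.symm)
    have ihρ := ih (hk'.trans (Nat.le_succ n)) ((ρ k : ℝ) : ℂ) hρknodes
    have hprodne : (∏ j ∈ Finset.range k, (((ρ k : ℝ) : ℂ) - (ρ j : ℂ))) ≠ 0 := by
      apply Finset.prod_ne_zero_iff.mpr
      intro j hj
      exact sub_ne_zero.mpr (hρknodes j (Finset.mem_range.mp hj))
    rw [hroots k hk'] at ihρ
    have hE : (pp n a ρ k).eval ((ρ k : ℝ) : ℂ) + b₀ * gg τ ρ k ((ρ k : ℝ) : ℂ) = 0 :=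
      (mul_eq_zero.mp ihρ).resolve_right hprodne
    have hg : (z - ((ρ k : ℝ) : ℂ)) * gg τ ρ (k+1) z
        = gg τ ρ k z - gg τ ρ k ((ρ k : ℝ) : ℂ) := by
      show (z - _) * ((gg τ ρ k z - gg τ ρ k _) / (z - _)) = _
      rw [mul_div_assoc']
      exact mul_div_cancel_left₀ _ (sub_ne_zero.mpr hzk)
    have hp := pp_eval_rec n a ρ k z
    rw [Finset.prod_range_succ, ← ihz]
    have expand : ((pp n a ρ (k+1)).eval z + ↑b₀ * gg τ ρ (k+1) z)
          * ((∏ j ∈ Finset.range k, (z - (ρ j : ℂ))) * (z - ((ρ k : ℝ) : ℂ)))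
        = (((z - ((ρ k : ℝ) : ℂ)) * (pp n a ρ (k+1)).eval z)
            + ↑b₀ * ((z - ((ρ k : ℝ) : ℂ)) * gg τ ρ (k+1) z))
          * ∏ j ∈ Finset.range k, (z - (ρ j : ℂ)) := by ring
    rw [expand, hp, hg]
    have : (pp n a ρ k).eval z - (pp n a ρ k).eval ((ρ k : ℝ):ℂ)
          + ↑b₀ * (gg τ ρ k z - gg τ ρ k ((ρ k : ℝ):ℂ))
        = ((pp n a ρ k).eval z + ↑b₀ * gg τ ρ k z)
          - ((pp n a ρ k).eval ((ρ k : ℝ):ℂ) + ↑b₀ * gg τ ρ k ((ρ k : ℝ):ℂ)) := by ring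
    rw [this, hE, sub_zero]

open MeasureTheory intervalIntegral Set

lemma final (τ : ℝ) (hτ : 0 < τ) (ρ : ℕ → ℝ) (j : ℕ) (s : ℂ)
    (hre : ρ (j+1) < s.re) (him : 0 ≤ s.im)
    (h0 : (∫ u in (0:ℝ)..τ, (mm τ ρ (j+1) u : ℂ) * Complex.exp (-u * s)) = 0) : False := by
  have cmm := mm_cont τ ρ (j+1)
  have cmmj := mm_cont τ ρ j
  have hint : IntervalIntegrable (fun u : ℝ => (mm τ ρ (j+1) u : ℂ) * Complex.exp (-u * s))
      volume 0 τ := by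
    apply Continuous.intervalIntegrable
    exact (Complex.continuous_ofReal.comp cmm).mul
      (Complex.continuous_exp.comp (((Complex.continuous_ofReal).neg).mul continuous_const))
  rcases eq_or_lt_of_le him with hy0 | hy
  · -- s.im = 0 : real part positive
    have h1 : (∫ u in (0:ℝ)..τ, Complex.reCLM ((mm τ ρ (j+1) u : ℂ) * Complex.exp (-u * s)))
        = Complex.reCLM (∫ u in (0:ℝ)..τ, (mm τ ρ (j+1) u : ℂ) * Complex.exp (-u * s)) :=
      ContinuousLinearMap.intervalIntegral_comp_comm _ hint
    rw [h0, map_zero] at h1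
    have heq : (∫ u in (0:ℝ)..τ, mm τ ρ (j+1) u * Real.exp (-(u * s.re)))
        = ∫ u in (0:ℝ)..τ, Complex.reCLM ((mm τ ρ (j+1) u : ℂ) * Complex.exp (-u * s)) := by
      apply intervalIntegral.integral_congr
      intro u _
      show mm τ ρ (j+1) u * Real.exp (-(u * s.re))
        = ((mm τ ρ (j+1) u : ℂ) * Complex.exp (-u * s)).re
      rw [Complex.mul_re]
      simp [Complex.exp_re, Complex.exp_im, ← hy0]
    have h2 : (∫ u in (0:ℝ)..τ, mm τ ρ (j+1) u * Real.exp (-(u * s.re))) = 0 := heq.trans h1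
    have hpos : 0 < ∫ u in (0:ℝ)..τ, mm τ ρ (j+1) u * Real.exp (-(u * s.re)) := by
      apply intervalIntegral.intervalIntegral_pos_of_pos_on
      · exact (cmm.mul (Real.continuous_exp.comp
          ((continuous_id.mul continuous_const).neg))).intervalIntegrable 0 τ
      · intro u hu
        exact mul_pos (mm_pos τ ρ (j+1) u hu.1.le hu.2) (Real.exp_pos _)
      · exact hτ
    rw [h2] at hpos; exact lt_irrefl 0 hpos
  · -- s.im > 0 : imaginary part
    have h1 : (∫ u in (0:ℝ)..τ, Complex.imCLM ((mm τ ρ (j+1) u : ℂ) * Complex.exp (-u * s)))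
        = Complex.imCLM (∫ u in (0:ℝ)..τ, (mm τ ρ (j+1) u : ℂ) * Complex.exp (-u * s)) :=
      ContinuousLinearMap.intervalIntegral_comp_comm _ hint
    rw [h0, map_zero] at h1
    have h2 : (∫ u in (0:ℝ)..τ, mm τ ρ (j+1) u
        * (Real.exp (-(u * s.re)) * Real.sin (s.im * u))) = 0 := by
      have h3 : (∫ u in (0:ℝ)..τ, -(mm τ ρ (j+1) u
          * (Real.exp (-(u * s.re)) * Real.sin (s.im * u)))) = 0 := by
        refine Eq.trans ?_ h1
        apply intervalIntegral.integral_congr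
        intro u _
        show -(mm τ ρ (j+1) u * (Real.exp (-(u * s.re)) * Real.sin (s.im * u)))
          = ((mm τ ρ (j+1) u : ℂ) * Complex.exp (-u * s)).im
        have e1 : (-(u:ℂ) * s).re = -(u * s.re) := by simp [Complex.mul_re]
        have e2 : (-(u:ℂ) * s).im = -(u * s.im) := by simp [Complex.mul_im]
        rw [Complex.mul_im, Complex.ofReal_re, Complex.ofReal_im, Complex.exp_im, e1, e2,
          Real.sin_neg, show u * s.im = s.im * u by ring]
        ring
      rw [intervalIntegral.integral_neg, neg_eq_zero] at h3
      exact h3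
    -- substitute the integral representation of mm (j+1)
    set c := ρ (j+1) with hc
    have step1 : ∀ u ∈ uIcc (0:ℝ) τ, mm τ ρ (j+1) u
          * (Real.exp (-(u * s.re)) * Real.sin (s.im * u))
        = ∫ v in u..τ, mm τ ρ j v * Real.exp ((u - v) * c)
            * (Real.exp (-(u * s.re)) * Real.sin (s.im * u)) := by
      intro u _
      show (∫ v in u..τ, mm τ ρ j v * Real.exp ((u - v) * c))
          * (Real.exp (-(u * s.re)) * Real.sin (s.im * u)) = _
      rw [← intervalIntegral.integral_mul_const]
    have hjoint : Continuous fun p : ℝ × ℝ => mm τ ρ j p.2 * Real.exp ((p.1 - p.2) * c)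
        * (Real.exp (-(p.1 * s.re)) * Real.sin (s.im * p.1)) := by
      apply Continuous.mul
      · exact (cmmj.comp continuous_snd).mul
          (Real.continuous_exp.comp (((continuous_fst).sub continuous_snd).mul continuous_const))
      · exact (Real.continuous_exp.comp ((continuous_fst.mul continuous_const).neg)).mul
          (Real.continuous_sin.comp (continuous_const.mul continuous_fst))
    have fub := fubini_triangle (fun u v => mm τ ρ j v * Real.exp ((u - v) * c)
        * (Real.exp (-(u * s.re)) * Real.sin (s.im * u))) hjoint hτ.le
    have inner : ∀ v ∈ uIcc (0:ℝ) τ,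
        (∫ u in (0:ℝ)..v, mm τ ρ j v * Real.exp ((u - v) * c)
            * (Real.exp (-(u * s.re)) * Real.sin (s.im * u)))
        = (mm τ ρ j v * Real.exp (-(v * c)))
            * ∫ u in (0:ℝ)..v, Real.exp (-(s.re - c) * u) * Real.sin (s.im * u) := by
      intro v _
      rw [← intervalIntegral.integral_const_mul]
      apply intervalIntegral.integral_congr
      intro u _
      show mm τ ρ j v * Real.exp ((u - v) * c) * (Real.exp (-(u * s.re)) * Real.sin (s.im * u))
        = mm τ ρ j v * Real.exp (-(v * c)) * (Real.exp (-(s.re - c) * u) * Real.sin (s.im * u))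
      rw [show (u - v) * c = -(v * c) + (c * u) by ring, Real.exp_add,
        show -(s.re - c) * u = (c * u) + -(u * s.re) by ring, Real.exp_add]
      ring
    have h4 : (∫ v in (0:ℝ)..τ, (mm τ ρ j v * Real.exp (-(v * c)))
        * ∫ u in (0:ℝ)..v, Real.exp (-(s.re - c) * u) * Real.sin (s.im * u)) = 0 := by
      beta_reduce at fub
      rw [← intervalIntegral.integral_congr inner, fub,
        ← intervalIntegral.integral_congr step1, h2]
    have hpos : 0 < ∫ v in (0:ℝ)..τ, (mm τ ρ j v * Real.exp (-(v * c)))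
        * ∫ u in (0:ℝ)..v, Real.exp (-(s.re - c) * u) * Real.sin (s.im * u) := by
      apply intervalIntegral.intervalIntegral_pos_of_pos_on
      · apply Continuous.intervalIntegrable
        apply Continuous.mul
        · exact cmmj.mul (Real.continuous_exp.comp ((continuous_id.mul continuous_const).neg))
        · have hψ : Continuous fun v : ℝ =>
              ∫ u in (0:ℝ)..v, Real.exp (-(s.re - c) * u) * Real.sin (s.im * u) := by
            apply intervalIntegral.continuous_primitive
            intro a b
            exact (Continuous.intervalIntegrable
              ((Real.continuous_exp.comp (continuous_const.mul continuous_id)).mul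
                (Real.continuous_sin.comp (continuous_const.mul continuous_id))) a b)
          exact hψ
      · intro v hv
        apply mul_pos (mul_pos (mm_pos τ ρ j v hv.1.le hv.2) (Real.exp_pos _))
        exact exp_mul_sin_integral_pos (by linarith) hy hv.1
      · exact hτ
    rw [h4] at hpos; exact lt_irrefl 0 hpos

/-- CRRID property for `m = 0` and arbitrary `n ≥ 1`: if
`Δ(s) = s^n + Σ_{k<n} a_k s^k + b₀ e^{-sτ}` (with `τ > 0`) has `n + 1` real
roots `r 0 > r 1 > ⋯ > r n`, then the largest one, `r 0`, is dominant: every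
complex root `s` of `Δ` satisfies `Re s ≤ r 0`. -/
theorem crrid_dominancy_m0 (n : ℕ) (hn : 1 ≤ n) (τ : ℝ) (hτ : 0 < τ)
    (a : Fin n → ℝ) (b₀ : ℝ) (r : Fin (n + 1) → ℝ) (hr : StrictAnti r)
    (hroots : ∀ j : Fin (n + 1),
      (r j : ℂ) ^ n + (∑ k : Fin n, (a k : ℂ) * (r j : ℂ) ^ (k : ℕ)) +
        (b₀ : ℂ) * Complex.exp (-(r j : ℂ) * τ) = 0) :
    ∀ s : ℂ, s ^ n + (∑ k : Fin n, (a k : ℂ) * s ^ (k : ℕ)) +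
        (b₀ : ℂ) * Complex.exp (-s * τ) = 0 →
      s.re ≤ r 0 := by
  set ρ : ℕ → ℝ := fun k => r ⟨min k n, by omega⟩ with hρdef
  have hρ_eq : ∀ k (hk : k ≤ n), ρ k = r ⟨k, Nat.lt_succ_of_le hk⟩ := by
    intro k hk
    have hfin : (⟨min k n, by omega⟩ : Fin (n+1)) = ⟨k, Nat.lt_succ_of_le hk⟩ := by
      rw [Fin.mk_eq_mk]; exact min_eq_left hk
    show r ⟨min k n, by omega⟩ = r ⟨k, Nat.lt_succ_of_le hk⟩
    rw [hfin]
  have hd : ∀ i j : ℕ, i < j → j ≤ n → ρ i ≠ ρ j := by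
    intro i j hij hj
    rw [hρ_eq i (le_of_lt (lt_of_lt_of_le hij hj)), hρ_eq j hj]
    exact ne_of_gt (hr (show (⟨i, by omega⟩ : Fin (n+1)) < ⟨j, by omega⟩ from hij))
  have hρ_le : ∀ k, ρ k ≤ r 0 := fun k => hr.antitone (Fin.zero_le _)
  have hroots' : ∀ j : ℕ, j ≤ n → ((ρ j : ℂ)) ^ n
      + (∑ k : Fin n, (a k : ℂ) * (ρ j : ℂ) ^ (k:ℕ))
      + (b₀:ℂ) * Complex.exp (-(ρ j : ℂ) * τ) = 0 := by
    intro j hj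
    rw [hρ_eq j hj]
    exact hroots _
  have hb0 : b₀ ≠ 0 := by
    intro hb
    have hQ : pp n a ρ 0 = 0 := by
      apply Polynomial.eq_zero_of_natDegree_lt_card_of_eval_eq_zero _
        (f := fun j : Fin (n+1) => (r j : ℂ))
        (fun i j h => hr.injective (Complex.ofReal_inj.mp (by simpa using h)))
      · intro i
        have h6 := hroots i
        rw [hb] at h6
        show Polynomial.eval _ (X ^ n + ∑ k : Fin n, C ((a k : ℂ)) * X ^ (k : ℕ)) = 0
        simp only [Polynomial.eval_add, Polynomial.eval_pow, Polynomial.eval_X,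
          Polynomial.eval_finset_sum, Polynomial.eval_mul, Polynomial.eval_C]
        simpa using h6
      · calc (pp n a ρ 0).natDegree ≤ n - 0 := pp_deg n a ρ 0
          _ < Fintype.card (Fin (n+1)) := by simp
    have h1 : (Polynomial.X ^ n + ∑ k : Fin n, C ((a k : ℂ)) * X ^ (k : ℕ)).coeff n = (1:ℂ) := by
      rw [Polynomial.coeff_add, Polynomial.coeff_X_pow, if_pos rfl, Polynomial.finset_sum_coeff]
      rw [Finset.sum_eq_zero, add_zero]
      intro k _
      rw [Polynomial.coeff_C_mul, Polynomial.coeff_X_pow, if_neg (Nat.ne_of_gt k.2), mul_zero]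
    have h2 : (pp n a ρ 0).coeff n = 1 := h1
    rw [hQ] at h2
    simp at h2
  intro s hs
  by_contra hcon
  push_neg at hcon
  have haux : ∀ t : ℂ, (t ^ n + (∑ k : Fin n, (a k : ℂ) * t ^ (k : ℕ))
      + (b₀ : ℂ) * Complex.exp (-t * τ) = 0) → 0 ≤ t.im → r 0 < t.re → False := by
    intro t ht htim htre
    have ht_ne : ∀ j : ℕ, j < n + 1 → t ≠ (ρ j : ℂ) := by
      intro j _ h
      have h7 : t.re = ρ j := by rw [h]; simp
      have h8 := hρ_le j
      linarith
    have hbr := bridge n τ a b₀ ρ hroots' hd (n+1) le_rfl t ht_ne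
    rw [ht] at hbr
    have hprodne : (∏ j ∈ Finset.range (n+1), (t - (ρ j : ℂ))) ≠ 0 :=
      Finset.prod_ne_zero_iff.mpr
        (fun j hj => sub_ne_zero.mpr (ht_ne j (Finset.mem_range.mp hj)))
    have hgg0 : gg τ ρ (n+1) t = 0 := by
      have h5 := (mul_eq_zero.mp hbr).resolve_right hprodne
      rw [pp_last n a ρ, Polynomial.eval_zero, zero_add] at h5
      exact (mul_eq_zero.mp h5).resolve_left (by exact_mod_cast hb0)
    have hrep := gg_rep τ hτ.le ρ n hd t (fun j hj => ht_ne j (by omega))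
    rw [hgg0] at hrep
    have hint0 : (∫ u in (0:ℝ)..τ, (mm τ ρ n u : ℂ) * Complex.exp (-u * t)) = 0 := by
      have hne : ((-1 : ℂ))^(n+1) ≠ 0 := pow_ne_zero _ (by norm_num)
      exact (mul_eq_zero.mp hrep.symm).resolve_left hne
    obtain ⟨j, rfl⟩ : ∃ j, n = j + 1 := ⟨n - 1, by omega⟩
    exact final τ hτ ρ j t (lt_of_le_of_lt (hρ_le (j+1)) htre) htim hint0
  rcases le_or_gt 0 s.im with him | him
  · exact haux s hs him hcon
  · apply haux ((starRingEnd ℂ) s)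
    · have hc := congrArg (starRingEnd ℂ) hs
      simp only [map_add, map_mul, map_pow, map_sum, map_zero, Complex.conj_ofReal,
        ← Complex.exp_conj, map_neg] at hc
      exact hc
    · simp only [Complex.conj_im]
      linarith
    · simpa using hcon
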